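/- arXiv:1811.01922 — 3 statements merged into one kernel-verified Lean document; each statement's English description precedes it below -/
import Mathlib

section
/- Let T be a compact Hausdorff space. Every unital *-homomorphism ρ : C(T, ℂ) → M₂(ℂ) can be written in the form ρ(a) = a(t₁)·p + a(t₂)·(1−p) for some points t₁, t₂ ∈ T and some projection p ∈ M₂(ℂ) with p equal to I₂ or a rank-one projection (taking p = I₂ when t₁ = t₂ is allowed). -/
open Matrix

lemma char_exists {T : Type*} [TopologicalSpace T] [CompactSpace T] [T2Space T]
    (φ : C(T, ℂ) →ₐ[ℂ] ℂ) : ∃ t : T, ∀ a : C(T, ℂ), φ a = a t := by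
  obtain ⟨t, ht⟩ := (WeakDual.CharacterSpace.homeoEval T ℂ).surjective
    (WeakDual.CharacterSpace.equivAlgHom.symm φ)
  refine ⟨t, fun a => ?_⟩
  have h1 : ⇑(WeakDual.CharacterSpace.equivAlgHom.symm φ) = ⇑φ :=
    WeakDual.CharacterSpace.equivAlgHom_symm_coe φ
  rw [← h1, ← ht]
  rfl

lemma rank_one_le {n : Type*} [Fintype n] [DecidableEq n] (M : Matrix n n ℂ) (h : M ≠ 0) :
    1 ≤ M.rank := by
  rw [Nat.one_le_iff_ne_zero]
  intro h0
  apply h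
  have hfr : Module.finrank ℂ (LinearMap.range M.mulVecLin) = 0 := h0
  have hbot : LinearMap.range M.mulVecLin = ⊥ := Submodule.finrank_eq_zero.mp hfr
  have hz : M.mulVecLin = 0 := LinearMap.range_eq_bot.mp hbot
  ext i j
  have h2 : M.mulVec (Pi.single j 1) i = 0 := by
    have := congrFun (congrFun (congrArg DFunLike.coe hz) (Pi.single j 1)) i
    simpa using this
  simpa [Matrix.mulVec_single] using h2

lemma rank_proj (p : Matrix (Fin 2) (Fin 2) ℂ) (hp : p * p = p) (h0 : p ≠ 0)
    (h1 : (1 : Matrix (Fin 2) (Fin 2) ℂ) - p ≠ 0) : p.rank = 1 := by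
  have hmul : p * (1 - p) = 0 := by rw [mul_sub, mul_one, hp, sub_self]
  have hle := Matrix.rank_add_rank_le_card_of_mul_eq_zero hmul
  simp only [Fintype.card_fin] at hle
  have l1 := rank_one_le p h0
  have l2 := rank_one_le (1 - p) h1
  omega

lemma decomp (p M : Matrix (Fin 2) (Fin 2) ℂ) (hp : p * p = p) (htr : p.trace = 1)
    (hc : M * p = p * M) :
    M = (p * M).trace • p + ((1 - p) * M).trace • (1 - p) := by
  have htr' : p 1 1 = 1 - p 0 0 := by
    have h : p 0 0 + p 1 1 = 1 := by simpa [Matrix.trace, Fin.sum_univ_two] using htr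
    linear_combination h
  have hβγ : p 0 1 * p 1 0 = p 0 0 - p 0 0 ^ 2 := by
    have h := congrFun (congrFun hp 0) 0
    simp [Matrix.mul_apply, Fin.sum_univ_two] at h
    linear_combination h
  have e1 : p 0 1 * M 1 0 = p 1 0 * M 0 1 := by
    have h := congrFun (congrFun hc 0) 0
    simp [Matrix.mul_apply, Fin.sum_univ_two] at h
    linear_combination -h
  have e2 : p 0 1 * (M 1 1 - M 0 0) = M 0 1 * (1 - 2 * p 0 0) := by
    have h := congrFun (congrFun hc 0) 1
    simp [Matrix.mul_apply, Fin.sum_univ_two, htr'] at h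
    linear_combination -h
  have e3 : p 1 0 * (M 0 0 - M 1 1) = M 1 0 * (2 * p 0 0 - 1) := by
    have h := congrFun (congrFun hc 1) 0
    simp [Matrix.mul_apply, Fin.sum_univ_two, htr'] at h
    linear_combination -h
  ext i j
  fin_cases i <;> fin_cases j <;>
    simp [Matrix.trace, Matrix.mul_apply, Fin.sum_univ_two, Matrix.one_apply, htr']
  · linear_combination p 0 1 * e3 - p 1 0 * e2 - 2*(M 0 0 - M 1 1) * hβγ
  · linear_combination (2*p 0 0 - 1) * e2 - 2*p 0 1 * e1 - 4*M 0 1 * hβγ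
  · linear_combination -(2*p 0 0 - 1) * e3 + 2*p 1 0 * e1 - 4*M 1 0 * hβγ
  · linear_combination -(p 0 1 * e3 - p 1 0 * e2 - 2*(M 0 0 - M 1 1) * hβγ)

lemma herm_proj (H : Matrix (Fin 2) (Fin 2) ℂ) (hH : Hᴴ = H) (hns : H ≠ H 0 0 • 1) :
    ∃ p : Matrix (Fin 2) (Fin 2) ℂ, pᴴ = p ∧ p * p = p ∧ p.trace = 1 ∧
      ∃ c₁ c₂ : ℂ, p = c₁ • H + c₂ • 1 := by
  have ha : (starRingEnd ℂ) (H 0 0) = H 0 0 := by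
    have := congrFun (congrFun hH 0) 0
    simpa [Matrix.conjTranspose_apply] using this
  have hd : (starRingEnd ℂ) (H 1 1) = H 1 1 := by
    have := congrFun (congrFun hH 1) 1
    simpa [Matrix.conjTranspose_apply] using this
  have h10 : H 1 0 = (starRingEnd ℂ) (H 0 1) := by
    have := congrFun (congrFun hH 1) 0
    simpa [Matrix.conjTranspose_apply] using this.symm
  have haR : ((H 0 0).re : ℂ) = H 0 0 := Complex.conj_eq_iff_re.mp ha
  have hdR : ((H 1 1).re : ℂ) = H 1 1 := Complex.conj_eq_iff_re.mp hd
  set s : ℝ := (H 0 0).re - (H 1 1).re with hs_def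
  have hpos : 0 < s ^ 2 + 4 * Complex.normSq (H 0 1) := by
    rcases eq_or_ne (H 0 1) 0 with hb | hb
    · have hsne : s ≠ 0 := by
        intro hs0
        apply hns
        have had : H 0 0 = H 1 1 := by
          rw [← haR, ← hdR]
          norm_cast
          rw [hs_def] at hs0; linarith
        ext i j
        fin_cases i <;> fin_cases j <;>
          simp [Matrix.one_apply, hb, h10, ← had]
      have h1 : 0 < s ^ 2 := (sq_nonneg s).lt_of_ne' (pow_ne_zero 2 hsne)
      nlinarith [Complex.normSq_nonneg (H 0 1)]
    · nlinarith [Complex.normSq_pos.mpr hb, sq_nonneg s]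
  set r : ℝ := Real.sqrt (s ^ 2 + 4 * Complex.normSq (H 0 1)) with hr_def
  have hr : 0 < r := Real.sqrt_pos.mpr hpos
  have hr2 : r ^ 2 = s ^ 2 + 4 * Complex.normSq (H 0 1) := Real.sq_sqrt hpos.le
  have hrne : (r : ℂ) ≠ 0 := by exact_mod_cast hr.ne'
  have hr2C : ((r : ℂ)) ^ 2 = (H 0 0 - H 1 1) ^ 2 + 4 * (H 0 1 * (starRingEnd ℂ) (H 0 1)) := by
    rw [Complex.mul_conj,
      show H 0 0 - H 1 1 = ((s : ℝ) : ℂ) by rw [hs_def]; push_cast; rw [haR, hdR]]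
    norm_cast
  set lc : ℂ := (H 0 0 + H 1 1 - (r : ℂ)) / 2 with hlc_def
  have hlc_conj : star lc = lc := by
    simp only [hlc_def, star_div₀, star_sub, star_add, RCLike.star_def, ha, hd,
      Complex.conj_ofReal, map_ofNat]
  set X : Matrix (Fin 2) (Fin 2) ℂ := H - lc • 1 with hX_def
  have hXX : X * X = (r : ℂ) • X := by
    ext i j
    fin_cases i <;> fin_cases j <;>
      simp [hX_def, Matrix.mul_apply, Fin.sum_univ_two, Matrix.one_apply, hlc_def, h10,
        smul_eq_mul] <;>
      ring_nf
    · linear_combination (-(1:ℂ)/4) * hr2C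
    · linear_combination (-(1:ℂ)/4) * hr2C
  refine ⟨(r : ℂ)⁻¹ • X, ?_, ?_, ?_, (r : ℂ)⁻¹, -((r : ℂ)⁻¹ * lc), ?_⟩
  · rw [Matrix.conjTranspose_smul, hX_def, Matrix.conjTranspose_sub, hH,
      Matrix.conjTranspose_smul, Matrix.conjTranspose_one]
    congr 1
    · simp [Complex.conj_ofReal]
    · rw [show star lc = lc from hlc_conj]
  · rw [Matrix.smul_mul, Matrix.mul_smul, hXX, smul_smul, smul_smul]
    congr 1
    field_simp
  · have ht : X.trace = H 0 0 + H 1 1 - 2 * lc := by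
      simp [hX_def, Matrix.trace, Fin.sum_univ_two, Matrix.one_apply, smul_eq_mul]
    rw [Matrix.trace_smul, ht, hlc_def]
    field_simp
    rw [smul_eq_mul, sub_sub_cancel, one_div]
    exact inv_mul_cancel₀ hrne
  · rw [hX_def, smul_sub, smul_smul, neg_smul, sub_eq_add_neg]

lemma prod_form (p : Matrix (Fin 2) (Fin 2) ℂ) (hp : p * p = p) (u v u' v' : ℂ) :
    (u • p + v • (1 - p)) * (u' • p + v' • (1 - p)) =
      (u * u') • p + (v * v') • (1 - p) := by
  have h1 : p * (1 - p) = 0 := by rw [mul_sub, mul_one, hp, sub_self]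
  have h2 : (1 - p) * p = 0 := by rw [sub_mul, one_mul, hp, sub_self]
  have h3 : (1 - p) * (1 - p) = 1 - p := by rw [sub_mul, one_mul, mul_sub, mul_one, hp]; abel
  rw [add_mul, mul_add, mul_add, Matrix.smul_mul, Matrix.mul_smul, Matrix.smul_mul,
    Matrix.mul_smul, Matrix.smul_mul, Matrix.mul_smul, Matrix.smul_mul, Matrix.mul_smul,
    hp, h1, h2, h3]
  simp [smul_smul]

lemma tr_form1 (p : Matrix (Fin 2) (Fin 2) ℂ) (hp : p * p = p) (htr : p.trace = 1) (u v : ℂ) :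
    (p * (u • p + v • (1 - p))).trace = u := by
  have h1 : p * (1 - p) = 0 := by rw [mul_sub, mul_one, hp, sub_self]
  rw [mul_add, Matrix.mul_smul, Matrix.mul_smul, hp, h1]
  simp [htr]

lemma tr_form2 (p : Matrix (Fin 2) (Fin 2) ℂ) (hp : p * p = p) (htr : p.trace = 1) (u v : ℂ) :
    ((1 - p) * (u • p + v • (1 - p))).trace = v := by
  have h2 : (1 - p) * p = 0 := by rw [sub_mul, one_mul, hp, sub_self]
  have h3 : (1 - p) * (1 - p) = 1 - p := by rw [sub_mul, one_mul, mul_sub, mul_one, hp]; abel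
  have htr1 : (1 - p : Matrix (Fin 2) (Fin 2) ℂ).trace = 1 := by
    rw [Matrix.trace_sub, Matrix.trace_one, htr]
    norm_num
  rw [mul_add, Matrix.mul_smul, Matrix.mul_smul, h2, h3]
  simp [htr1]

theorem stmt_11 (T : Type*) [TopologicalSpace T] [CompactSpace T] [T2Space T]
    (ρ : C(T, ℂ) →⋆ₐ[ℂ] Matrix (Fin 2) (Fin 2) ℂ) :
    ∃ (t₁ t₂ : T) (p : Matrix (Fin 2) (Fin 2) ℂ),
      pᴴ = p ∧ p * p = p ∧ (p = 1 ∨ p.rank = 1) ∧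
      ∀ a : C(T, ℂ), ρ a = a t₁ • p + a t₂ • (1 - p) := by
  by_cases hscal : ∀ x : C(T, ℂ), ρ x = ρ x 0 0 • 1
  · -- scalar case
    let φ : C(T, ℂ) →ₐ[ℂ] ℂ :=
      { toFun := fun x => ρ x 0 0
        map_one' := by
          show ρ 1 0 0 = 1
          rw [_root_.map_one]; simp [Matrix.one_apply]
        map_mul' := fun x y => by
          show ρ (x * y) 0 0 = ρ x 0 0 * ρ y 0 0
          have h : ρ (x * y) = ρ x * ρ y := _root_.map_mul ρ x y
          rw [h, hscal x, hscal y]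
          simp [Matrix.mul_apply, Fin.sum_univ_two, Matrix.one_apply]
        map_zero' := by
          show ρ 0 0 0 = 0
          rw [_root_.map_zero]; simp
        map_add' := fun x y => by
          show ρ (x + y) 0 0 = ρ x 0 0 + ρ y 0 0
          rw [_root_.map_add]; simp
        commutes' := fun c => by
          show ρ (algebraMap ℂ C(T, ℂ) c) 0 0 = algebraMap ℂ ℂ c
          have h : ρ (algebraMap ℂ C(T, ℂ) c) = algebraMap ℂ (Matrix (Fin 2) (Fin 2) ℂ) c :=
            AlgHomClass.commutes ρ c
          rw [h, Algebra.algebraMap_eq_smul_one]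
          simp [Matrix.one_apply] }
    obtain ⟨t, ht⟩ := char_exists φ
    refine ⟨t, t, 1, by simp, by simp, Or.inl rfl, fun a => ?_⟩
    have h1 : ρ a 0 0 = a t := ht a
    rw [hscal a, h1]
    simp
  · push_neg at hscal
    obtain ⟨x₀, hx₀⟩ := hscal
    have hcomm : ∀ x y : C(T, ℂ), ρ x * ρ y = ρ y * ρ x := fun x y => by
      rw [← _root_.map_mul, ← _root_.map_mul, mul_comm]
    have hstar : ∀ x : C(T, ℂ), (ρ x)ᴴ = ρ (star x) := fun x => (map_star ρ x).symm
    -- find a nonscalar hermitian H commuting with everything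
    obtain ⟨H, hH, hns, hcomH⟩ :
        ∃ H : Matrix (Fin 2) (Fin 2) ℂ, Hᴴ = H ∧ H ≠ H 0 0 • 1 ∧
          ∀ x : C(T, ℂ), ρ x * H = H * ρ x := by
      set H₁ := ρ (x₀ + star x₀) with hH₁
      set H₂ := Complex.I • (ρ x₀ - ρ (star x₀)) with hH₂
      have hH₁h : H₁ᴴ = H₁ := by
        rw [hH₁, hstar, star_add, star_star, add_comm]
      have hH₂h : H₂ᴴ = H₂ := by
        rw [hH₂, Matrix.conjTranspose_smul, Matrix.conjTranspose_sub, hstar, hstar, star_star]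
        simp only [RCLike.star_def, Complex.conj_I, neg_smul, smul_sub, neg_sub]
        module
      have hc₁ : ∀ x, ρ x * H₁ = H₁ * ρ x := fun x => hcomm x _
      have hc₂ : ∀ x, ρ x * H₂ = H₂ * ρ x := fun x => by
        rw [hH₂, Matrix.mul_smul, Matrix.smul_mul, Matrix.mul_sub, Matrix.sub_mul,
          hcomm x x₀, hcomm x (star x₀)]
      by_cases h1 : H₁ = H₁ 0 0 • 1
      · by_cases h2 : H₂ = H₂ 0 0 • 1
        · exfalso
          apply hx₀
          have hkey : (2 : ℂ) • ρ x₀ = H₁ + (-Complex.I) • H₂ := by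
            rw [hH₁, hH₂, _root_.map_add, smul_smul]
            have : -Complex.I * Complex.I = 1 := by
              rw [neg_mul, Complex.I_mul_I, neg_neg]
            rw [this, one_smul]
            module
          rw [h1, h2] at hkey
          have hz : ρ x₀ = ((2 : ℂ)⁻¹ * (H₁ 0 0 + -(Complex.I * H₂ 0 0))) • 1 := by
            have h2' : (2 : ℂ) • ρ x₀ = (H₁ 0 0 + -Complex.I * H₂ 0 0) • 1 := by
              rw [hkey, smul_smul]
              module
            have := congrArg (fun M => ((2 : ℂ)⁻¹ : ℂ) • M) h2'
            simpa [smul_smul] using this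
          have he : ρ x₀ 0 0 = (2 : ℂ)⁻¹ * (H₁ 0 0 + -(Complex.I * H₂ 0 0)) := by
            rw [hz]
            simp [Matrix.one_apply]
          rw [he]
          exact hz
        · exact ⟨H₂, hH₂h, h2, hc₂⟩
      · exact ⟨H₁, hH₁h, h1, hc₁⟩
    obtain ⟨p, hpherm, hpidem, hptr, c₁, c₂, hpform⟩ := herm_proj H hH hns
    have hcomp : ∀ x : C(T, ℂ), ρ x * p = p * ρ x := fun x => by
      rw [hpform, Matrix.mul_add, Matrix.add_mul, Matrix.mul_smul, Matrix.smul_mul,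
        Matrix.mul_smul, Matrix.smul_mul, hcomH x, mul_one, one_mul]
    have hdec : ∀ x : C(T, ℂ),
        ρ x = (p * ρ x).trace • p + ((1 - p) * ρ x).trace • (1 - p) := fun x =>
      decomp p (ρ x) hpidem hptr (hcomp x)
    have halg : ∀ c : ℂ, ρ (algebraMap ℂ C(T, ℂ) c) = c • 1 := fun c => by
      rw [AlgHomClass.commutes ρ c, Algebra.algebraMap_eq_smul_one]
    let φ₁ : C(T, ℂ) →ₐ[ℂ] ℂ :=
      { toFun := fun x => (p * ρ x).trace
        map_one' := by
          show (p * ρ 1).trace = 1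
          rw [_root_.map_one, mul_one, hptr]
        map_mul' := fun x y => by
          show (p * ρ (x * y)).trace = _
          rw [_root_.map_mul, hdec x, hdec y, prod_form p hpidem, tr_form1 p hpidem hptr,
            tr_form1 p hpidem hptr, tr_form1 p hpidem hptr]
        map_zero' := by
          show (p * ρ 0).trace = 0
          rw [_root_.map_zero, mul_zero, Matrix.trace_zero]
        map_add' := fun x y => by
          show (p * ρ (x + y)).trace = _
          rw [_root_.map_add, mul_add, Matrix.trace_add]
        commutes' := fun c => by
          show (p * ρ (algebraMap ℂ C(T, ℂ) c)).trace = _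
          rw [halg c, Matrix.mul_smul, mul_one, Matrix.trace_smul, hptr]
          simp }
    let φ₂ : C(T, ℂ) →ₐ[ℂ] ℂ :=
      { toFun := fun x => ((1 - p) * ρ x).trace
        map_one' := by
          show ((1 - p) * ρ 1).trace = 1
          rw [_root_.map_one, mul_one, Matrix.trace_sub, Matrix.trace_one, hptr]
          norm_num
        map_mul' := fun x y => by
          show ((1 - p) * ρ (x * y)).trace = _
          rw [_root_.map_mul, hdec x, hdec y, prod_form p hpidem, tr_form2 p hpidem hptr,
            tr_form2 p hpidem hptr, tr_form2 p hpidem hptr]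
        map_zero' := by
          show ((1 - p) * ρ 0).trace = 0
          rw [_root_.map_zero, mul_zero, Matrix.trace_zero]
        map_add' := fun x y => by
          show ((1 - p) * ρ (x + y)).trace = _
          rw [_root_.map_add, mul_add, Matrix.trace_add]
        commutes' := fun c => by
          show ((1 - p) * ρ (algebraMap ℂ C(T, ℂ) c)).trace = _
          rw [halg c, Matrix.mul_smul, mul_one, Matrix.trace_smul, Matrix.trace_sub,
            Matrix.trace_one, hptr]
          simp only [Fintype.card_fin, smul_eq_mul, Algebra.algebraMap_self, RingHom.id_apply]
          push_cast
          ring }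
    obtain ⟨t₁, ht₁⟩ := char_exists φ₁
    obtain ⟨t₂, ht₂⟩ := char_exists φ₂
    have hp0 : p ≠ 0 := by
      intro h
      rw [h] at hptr
      simp at hptr
    have hp1 : (1 : Matrix (Fin 2) (Fin 2) ℂ) - p ≠ 0 := by
      intro h
      have : ((1 : Matrix (Fin 2) (Fin 2) ℂ) - p).trace = 0 := by rw [h]; simp
      rw [Matrix.trace_sub, Matrix.trace_one, hptr] at this
      norm_num at this
    refine ⟨t₁, t₂, p, hpherm, hpidem, Or.inr (rank_proj p hpidem hp0 hp1), fun a => ?_⟩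
    have e₁ : (p * ρ a).trace = a t₁ := ht₁ a
    have e₂ : ((1 - p) * ρ a).trace = a t₂ := ht₂ a
    rw [hdec a, e₁, e₂]
end

section
/- Let T be a compact Hausdorff space with basepoint t₀, and let X be a topological space with basepoint x₀. Suppose q : S² × T × T → X is a continuous map with q(1,0,t₀,t₀) = x₀ such that q(x, t₁, t₂) = q(−x, t₂, t₁) for all x ∈ S², t₁, t₂ ∈ T, and such that q(x, t, t) is independent of x for each t ∈ T. Then for every loop φ in T based at t₀, the loops τ ↦ q((1,0), φ(τ), t₀) and τ ↦ q((1,0), t₀, φ(τ)) are homotopic rel endpoints in X. -/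
/-- The 2-sphere, realized inside `ℂ × ℝ`. -/
abbrev Sph2 : Type := {p : ℂ × ℝ // ‖p.1‖ ^ 2 + p.2 ^ 2 = 1}

/-- The antipodal map on the sphere. -/
def Sph2.neg (x : Sph2) : Sph2 :=
  ⟨-x.1, by simpa [neg_sq] using x.2⟩

/-- The point `(1, 0)` of the sphere. -/
def Sph2.pt : Sph2 := ⟨((1 : ℂ), (0 : ℝ)), by norm_num⟩

/-- A path on the sphere from `(1,0)` to `(-1,0)`. -/
noncomputable def sphPath (s : unitInterval) : Sph2 :=
  ⟨(Complex.exp (Real.pi * s * Complex.I), 0), by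
    simp [Complex.norm_exp]⟩

lemma sphPath_continuous : Continuous sphPath := by
  apply Continuous.subtype_mk
  exact (Complex.continuous_exp.comp (by continuity)).prodMk continuous_const

lemma sphPath_zero : sphPath 0 = Sph2.pt := by
  simp [sphPath, Sph2.pt]

lemma sphPath_one : sphPath 1 = Sph2.pt.neg := by
  simp [sphPath, Sph2.pt, Sph2.neg, Complex.exp_pi_mul_I]

theorem stmt_12 (T X : Type*) [TopologicalSpace T] [CompactSpace T] [T2Space T]
    [TopologicalSpace X] (t₀ : T) (x₀ : X)
    (q : Sph2 × T × T → X) (hq : Continuous q)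
    (hbase : q (Sph2.pt, t₀, t₀) = x₀)
    (hsym : ∀ (x : Sph2) (t₁ t₂ : T), q (x, t₁, t₂) = q (x.neg, t₂, t₁))
    (hdiag : ∀ (x y : Sph2) (t : T), q (x, t, t) = q (y, t, t))
    (φ : Path t₀ t₀) :
    Path.Homotopic
      (φ.map (show Continuous fun t => q (Sph2.pt, t, t₀) from
        hq.comp (continuous_const.prodMk (continuous_id.prodMk continuous_const))))
      (φ.map (show Continuous fun t => q (Sph2.pt, t₀, t) from
        hq.comp (continuous_const.prodMk (continuous_const.prodMk continuous_id)))) := by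
  refine ⟨{
    toFun := fun p => q (sphPath p.1, φ p.2, t₀)
    continuous_toFun := hq.comp (((sphPath_continuous.comp continuous_fst).prodMk
      (((φ.continuous.comp continuous_snd)).prodMk continuous_const)))
    map_zero_left := ?_
    map_one_left := ?_
    prop' := ?_ }⟩
  · intro x; simp [sphPath_zero]
  · intro x; simp [sphPath_one, ← hsym]
  · intro t x hx
    have : φ x = t₀ := by
      rcases hx with hx | hx <;> subst hx <;> simp
    simp [this, hdiag (sphPath t) Sph2.pt, sphPath_zero]
end

section
/- With the hypotheses of the previous statement (q : S² × T × T → X continuous, symmetric under (x,t₁,t₂) ↦ (−x,t₂,t₁), with q(x,t,t) independent of x), the subgroup of π₁(X, x₀) given by the image of π₁(T, t₀) under the map ι_* induced by ι(t) = q((1,0), t, t) is commutative. -/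
open unitInterval

instance : ContractibleSpace (I × I) := by
  have h : Convex ℝ ((Set.Icc (0:ℝ) 1) ×ˢ (Set.Icc (0:ℝ) 1)) :=
    (convex_Icc 0 1).prod (convex_Icc 0 1)
  haveI : ContractibleSpace ↥((Set.Icc (0:ℝ) 1) ×ˢ (Set.Icc (0:ℝ) 1)) :=
    h.contractibleSpace ⟨(0,0), by simp⟩
  exact ((Homeomorph.Set.prod _ _).symm : (I × I) ≃ₜ _).contractibleSpace

/-- The identity path from `0` to `1` in the unit interval. -/
def stmt13.seg : Path (0:I) 1 := ⟨⟨fun t => t, continuous_id⟩, rfl, rfl⟩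

open stmt13 in
theorem stmt13.sqmap {Y : Type*} [TopologicalSpace Y] {f : I × I → Y} (hf : Continuous f)
    {a b : I × I} (p p' : Path a b) : (p.map hf).Homotopic (p'.map hf) :=
  Path.Homotopic.map (SimplyConnectedSpace.paths_homotopic p p') ⟨f, hf⟩

/-- The square lemma: going around a mapped square one way or the other gives
homotopic paths. -/
theorem stmt13.square {Y : Type*} [TopologicalSpace Y] {f : I × I → Y} (hf : Continuous f)
    {a b c d : Y} (pb : Path a b) (pr : Path b d) (pl : Path a c) (pt : Path c d)
    (hb : ∀ s, pb s = f (s, 0)) (hr : ∀ s, pr s = f (1, s))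
    (hl : ∀ s, pl s = f (0, s)) (ht : ∀ s, pt s = f (s, 1)) :
    (pb.trans pr).Homotopic (pl.trans pt) := by
  obtain rfl : a = f (0, 0) := pb.source.symm.trans (hb 0)
  obtain rfl : b = f (1, 0) := pb.target.symm.trans (hb 1)
  obtain rfl : c = f (0, 1) := pl.target.symm.trans (hl 1)
  obtain rfl : d = f (1, 1) := pr.target.symm.trans (hr 1)
  have e1 : pb = (seg.prod (Path.refl 0)).map hf := by
    ext s; simpa [Path.prod, seg] using hb s
  have e2 : pr = ((Path.refl 1).prod seg).map hf := by
    ext s; simpa [Path.prod, seg] using hr s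
  have e3 : pl = ((Path.refl 0).prod seg).map hf := by
    ext s; simpa [Path.prod, seg] using hl s
  have e4 : pt = (seg.prod (Path.refl 1)).map hf := by
    ext s; simpa [Path.prod, seg] using ht s
  rw [e1, e2, e3, e4, ← Path.map_trans, ← Path.map_trans]
  exact sqmap hf _ _

/-- The diagonal of a mapped square is homotopic to the bottom-right boundary. -/
theorem stmt13.diagsq {Y : Type*} [TopologicalSpace Y] {f : I × I → Y} (hf : Continuous f)
    {a b d : Y} (pd : Path a d) (pb : Path a b) (pr : Path b d)
    (hd : ∀ s, pd s = f (s, s)) (hb : ∀ s, pb s = f (s, 0)) (hr : ∀ s, pr s = f (1, s)) :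
    pd.Homotopic (pb.trans pr) := by
  obtain rfl : a = f (0, 0) := pb.source.symm.trans (hb 0)
  obtain rfl : b = f (1, 0) := pb.target.symm.trans (hb 1)
  obtain rfl : d = f (1, 1) := pr.target.symm.trans (hr 1)
  have e0 : pd = (seg.prod seg).map hf := by
    ext s; simpa [Path.prod, seg] using hd s
  have e1 : pb = (seg.prod (Path.refl 0)).map hf := by
    ext s; simpa [Path.prod, seg] using hb s
  have e2 : pr = ((Path.refl 1).prod seg).map hf := by
    ext s; simpa [Path.prod, seg] using hr s
  rw [e0, e1, e2, ← Path.map_trans]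
  exact sqmap hf _ _

/-- A path on the sphere from `(1,0)` to its antipode. -/
noncomputable def stmt13.sp : Path Sph2.pt (Sph2.neg Sph2.pt) where
  toFun t := ⟨(Complex.exp ((Real.pi * t : ℝ) * Complex.I), 0), by
    rw [Complex.norm_exp_ofReal_mul_I]; norm_num⟩
  continuous_toFun := by
    apply Continuous.subtype_mk
    exact (Complex.continuous_exp.comp
      ((Complex.continuous_ofReal.comp (continuous_const.mul continuous_subtype_val)).mul
        continuous_const)).prodMk continuous_const
  source' := by
    apply Subtype.ext; simp [Sph2.pt]
  target' := by
    apply Subtype.ext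
    simp [Sph2.pt, Sph2.neg, Complex.exp_pi_mul_I, Prod.ext_iff]

attribute [local instance] Path.Homotopic.setoid

/-- A loop at `x` as an endomorphism in the fundamental groupoid. -/
def stmt13.toE {X : Type*} [TopologicalSpace X] (x : X) (p : Path x x) :
    CategoryTheory.End (FundamentalGroupoid.mk x) := ⟦p⟧

lemma stmt13.toE_trans {X : Type*} [TopologicalSpace X] (x : X) (p p' : Path x x) :
    toE x (p.trans p') = toE x p' * toE x p := by
  rw [CategoryTheory.End.mul_def]
  exact Path.Homotopic.Quotient.mk_trans p p'

lemma stmt13.toE_sound {X : Type*} [TopologicalSpace X] (x : X) {p p' : Path x x}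
    (h : p.Homotopic p') : toE x p = toE x p' :=
  Quotient.sound h

lemma stmt13.toE_exact {X : Type*} [TopologicalSpace X] (x : X) {p p' : Path x x}
    (h : toE x p = toE x p') : p.Homotopic p' :=
  Quotient.exact h

open stmt13 CategoryTheory in
/-- The image of `π₁(T, t₀)` under the map induced by `ι(t) = q((1,0), t, t)` is
commutative: the images of any two loops commute up to path homotopy. -/
theorem stmt_13 (T X : Type*) [TopologicalSpace T] [CompactSpace T] [T2Space T]
    [TopologicalSpace X] (t₀ : T) (x₀ : X)
    (q : Sph2 × T × T → X) (hq : Continuous q)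
    (hbase : q (Sph2.pt, t₀, t₀) = x₀)
    (hsym : ∀ (x : Sph2) (t₁ t₂ : T), q (x, t₁, t₂) = q (x.neg, t₂, t₁))
    (hdiag : ∀ (x y : Sph2) (t : T), q (x, t, t) = q (y, t, t))
    (γ₁ γ₂ : Path t₀ t₀) :
    Path.Homotopic
      ((γ₁.map (show Continuous fun t => q (Sph2.pt, t, t) from
          hq.comp (continuous_const.prodMk (continuous_id.prodMk continuous_id)))).trans
        (γ₂.map (show Continuous fun t => q (Sph2.pt, t, t) from
          hq.comp (continuous_const.prodMk (continuous_id.prodMk continuous_id)))))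
      ((γ₂.map (show Continuous fun t => q (Sph2.pt, t, t) from
          hq.comp (continuous_const.prodMk (continuous_id.prodMk continuous_id)))).trans
        (γ₁.map (show Continuous fun t => q (Sph2.pt, t, t) from
          hq.comp (continuous_const.prodMk (continuous_id.prodMk continuous_id))))) := by
  have hc : Continuous fun t => q (Sph2.pt, t, t) :=
    hq.comp (continuous_const.prodMk (continuous_id.prodMk continuous_id))
  set x₁ : X := q (Sph2.pt, t₀, t₀) with hx₁
  -- the "one-sided" loops
  let A : Path t₀ t₀ → Path x₁ x₁ := fun γ =>
    ⟨⟨fun s => q (Sph2.pt, γ s, t₀),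
      hq.comp (continuous_const.prodMk (γ.continuous.prodMk continuous_const))⟩,
      by simp [x₁], by simp [x₁]⟩
  let B : Path t₀ t₀ → Path x₁ x₁ := fun γ =>
    ⟨⟨fun s => q (Sph2.pt, t₀, γ s),
      hq.comp (continuous_const.prodMk (continuous_const.prodMk γ.continuous))⟩,
      by simp [x₁], by simp [x₁]⟩
  -- claim 1 : the diagonal loop is homotopic to `A γ` followed by `B γ`
  have claim1 : ∀ γ : Path t₀ t₀, (γ.map hc).Homotopic ((A γ).trans (B γ)) := by
    intro γ
    have hf : Continuous fun p : I × I => q (Sph2.pt, γ p.1, γ p.2) :=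
      hq.comp (continuous_const.prodMk
        ((γ.continuous.comp continuous_fst).prodMk (γ.continuous.comp continuous_snd)))
    exact diagsq hf (γ.map hc) (A γ) (B γ) (fun s => rfl) (fun s => by simp [A])
      (fun s => by simp [B])
  -- claim 2 : `A γ` commutes with `B γ'`
  have claim2 : ∀ γ γ' : Path t₀ t₀,
      ((A γ).trans (B γ')).Homotopic ((B γ').trans (A γ)) := by
    intro γ γ'
    have hf : Continuous fun p : I × I => q (Sph2.pt, γ p.1, γ' p.2) :=
      hq.comp (continuous_const.prodMk
        ((γ.continuous.comp continuous_fst).prodMk (γ'.continuous.comp continuous_snd)))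
    exact square hf (A γ) (B γ') (B γ') (A γ) (fun s => by simp [A]) (fun s => by simp [B])
      (fun s => by simp [B]) (fun s => by simp [A])
  -- claim 3 : `A γ` is homotopic to `B γ`
  have claim3 : ∀ γ : Path t₀ t₀, (A γ).Homotopic (B γ) := by
    intro γ
    have hf : Continuous fun p : I × I => q (sp p.1, γ p.2, t₀) :=
      hq.comp ((sp.continuous.comp continuous_fst).prodMk
        ((γ.continuous.comp continuous_snd).prodMk continuous_const))
    have hsq := square hf (Path.refl x₁) (B γ) (A γ) (Path.refl x₁)
      (fun s => by simp [hx₁]; exact hdiag _ _ _)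
      (fun s => by
        show q (Sph2.pt, t₀, γ s) = q (sp 1, γ s, t₀)
        rw [sp.target]; exact hsym _ _ _)
      (fun s => by
        show q (Sph2.pt, γ s, t₀) = q (sp 0, γ s, t₀)
        rw [sp.source])
      (fun s => by simp [hx₁]; exact hdiag _ _ _)
    have s1 : (A γ).Homotopic ((A γ).trans (Path.refl x₁)) :=
      ⟨(Path.Homotopy.transRefl (A γ)).symm⟩
    have s2 : ((Path.refl x₁).trans (B γ)).Homotopic (B γ) := ⟨Path.Homotopy.reflTrans (B γ)⟩
    exact s1.trans (hsq.symm.trans s2)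
  -- put everything together in the endomorphism monoid of the fundamental groupoid
  have h1 : (γ₁.map hc).Homotopic ((A γ₁).trans (A γ₁)) :=
    (claim1 γ₁).trans (Path.Homotopic.hcomp (Path.Homotopic.refl _) (claim3 γ₁).symm)
  have h2 : (γ₂.map hc).Homotopic ((A γ₂).trans (A γ₂)) :=
    (claim1 γ₂).trans (Path.Homotopic.hcomp (Path.Homotopic.refl _) (claim3 γ₂).symm)
  have hAC : ((A γ₁).trans (A γ₂)).Homotopic ((A γ₂).trans (A γ₁)) :=
    ((Path.Homotopic.hcomp (Path.Homotopic.refl (A γ₁)) (claim3 γ₂)).trans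
      (claim2 γ₁ γ₂)).trans (Path.Homotopic.hcomp (claim3 γ₂).symm (Path.Homotopic.refl _))
  show ((γ₁.map hc).trans (γ₂.map hc)).Homotopic ((γ₂.map hc).trans (γ₁.map hc))
  apply toE_exact x₁
  rw [toE_trans, toE_trans, toE_sound x₁ h1, toE_sound x₁ h2, toE_trans, toE_trans]
  have hcom : Commute (toE x₁ (A γ₁)) (toE x₁ (A γ₂)) := by
    have e3 := toE_sound x₁ hAC
    rw [toE_trans, toE_trans] at e3
    exact e3.symm
  exact ((hcom.mul_left hcom).mul_right (hcom.mul_left hcom)).eq.symm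
end
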